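/- Let R be a free ideal ring, self-injective, 𝒜 = {R}, and N a submodule of an R-module M. Then c_𝒜(N) = M if and only if M/N has no direct summand which is a free R-module of positive rank. -/

import Mathlib

/-- The 𝒜-regular closure of a submodule `N` of `M`. -/
def regClosure {R : Type} [Ring R] {M : Type} [AddCommGroup M] [Module R M]
    (𝒜 : Set (ModuleCat R)) (N : Submodule R M) : Submodule R M :=
  sInf { p | ∃ A ∈ 𝒜, ∃ g : M →ₗ[R] A, N ≤ LinearMap.ker g ∧ p = LinearMap.ker g }

theorem stmt_16 {R : Type} [Ring R]
    (hfir : ∀ I : Submodule R R, Module.Free R ↥I)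
    (hrank : ∀ (I : Submodule R R) (κ κ' : Type) (_ : Module.Basis κ R ↥I) (_ : Module.Basis κ' R ↥I),
      Nonempty (κ ≃ κ'))
    (hinjR : Module.Injective R R)
    {M : Type} [AddCommGroup M] [Module R M] (N : Submodule R M) :
    regClosure {ModuleCat.of R R} N = ⊤ ↔
      ¬ ∃ P Q : Submodule R (M ⧸ N), IsCompl P Q ∧ Module.Free R ↥P ∧ P ≠ ⊥ := by
  constructor
  · rintro h ⟨P, Q, hcompl, hfree, hne⟩
    obtain ⟨x, hx, hx0⟩ := Submodule.exists_mem_ne_zero_of_ne_bot hne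
    have : Module.Free R ↥P := hfree
    let b := Module.Free.chooseBasis R ↥P
    have hrepr : b.repr ⟨x, hx⟩ ≠ 0 := by
      intro hc
      apply hx0
      have : (⟨x, hx⟩ : ↥P) = 0 := by
        apply b.repr.injective
        simpa using hc
      simpa using congrArg Subtype.val this
    obtain ⟨i, hi⟩ : ∃ i, b.repr ⟨x, hx⟩ i ≠ 0 := by
      by_contra hc
      push_neg at hc
      exact hrepr (Finsupp.ext hc)
    let f : M →ₗ[R] R :=
      ((b.coord i).comp (P.projectionOnto Q hcompl)).comp N.mkQ
    have hker : N ≤ LinearMap.ker f := by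
      intro n hn
      simp [f, (Submodule.Quotient.mk_eq_zero N).2 hn, LinearMap.mem_ker]
    have hmem : LinearMap.ker f ∈
        { p | ∃ A ∈ ({ModuleCat.of R R} : Set (ModuleCat R)),
            ∃ g : M →ₗ[R] A, N ≤ LinearMap.ker g ∧ p = LinearMap.ker g } :=
      ⟨ModuleCat.of R R, rfl, f, hker, rfl⟩
    have htop : (⊤ : Submodule R M) ≤ LinearMap.ker f := h ▸ sInf_le hmem
    obtain ⟨m, hm⟩ := Submodule.mkQ_surjective N x
    have : f m = 0 := htop Submodule.mem_top
    rw [show f m = b.coord i (P.projectionOnto Q hcompl x) by simp [f, hm]] at this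
    rw [Submodule.projectionOnto_apply_left hcompl ⟨x, hx⟩] at this
    exact hi this
  · intro h
    rw [regClosure, sInf_eq_top]
    rintro p ⟨A, hA, g, hNg, rfl⟩
    rw [Set.mem_singleton_iff] at hA
    subst hA
    rw [LinearMap.ker_eq_top]
    by_contra hg
    let g' : M →ₗ[R] R := g
    let f : (M ⧸ N) →ₗ[R] R := N.liftQ g' hNg
    have hfne : f ≠ 0 := by
      intro hc
      apply hg
      ext m
      have : f (N.mkQ m) = 0 := by rw [hc]; rfl
      simpa [f] using this
    have hIfree : Module.Free R ↥(LinearMap.range f) := hfir _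
    have hproj : Module.Projective R ↥(LinearMap.range f) := Module.Projective.of_free
    obtain ⟨s, hs⟩ := f.rangeRestrict.exists_rightInverse_of_surjective
      (LinearMap.range_eq_top.2 f.surjective_rangeRestrict)
    have hsec : ∀ y : LinearMap.range f, f.rangeRestrict (s y) = y := fun y =>
      congrArg (· y) hs
    -- projection onto range s
    let π : (M ⧸ N) →ₗ[R] ↥(LinearMap.range s) :=
      (s.comp f.rangeRestrict).codRestrict (LinearMap.range s)
        (fun x => LinearMap.mem_range_self _ _)
    have hπ : ∀ x : LinearMap.range s, π x = x := by
      rintro ⟨_, y, rfl⟩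
      apply Subtype.ext
      simp [π, hsec y]
    have hcompl : IsCompl (LinearMap.range s) (LinearMap.ker π) :=
      LinearMap.isCompl_of_proj hπ
    have hsinj : Function.Injective s := by
      intro a b hab
      have := congrArg f.rangeRestrict hab
      rwa [hsec, hsec] at this
    have hfreeS : Module.Free R ↥(LinearMap.range s) :=
      Module.Free.of_equiv (LinearEquiv.ofInjective s hsinj)
    have hSne : LinearMap.range s ≠ ⊥ := by
      intro hc
      apply hfne
      have hI : LinearMap.range f = ⊥ := by
        rw [eq_bot_iff]
        rintro r hr
        have hs0 : s ⟨r, hr⟩ = 0 := by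
          have : s ⟨r, hr⟩ ∈ LinearMap.range s := LinearMap.mem_range_self _ _
          rwa [hc, Submodule.mem_bot] at this
        have := hsec ⟨r, hr⟩
        rw [hs0, map_zero] at this
        simpa using congrArg Subtype.val this.symm
      rw [← LinearMap.range_eq_bot, hI]
    exact h ⟨LinearMap.range s, LinearMap.ker π, hcompl, hfreeS, hSne⟩
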